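/- Let u_- > u_+ > 0, v_± > 0, u_+/v_+ < u_- /v_-. The 2-shock speed σ₂(ε) = u_+ + ((u_+ + √(u_+² + 4ε v_+))/(2v_+))·v_*(ε), where v_*(ε) is the two-shock intermediate density, satisfies σ₂(ε) → u_- + u_+ as ε → 0⁺. -/

import Mathlib

theorem sigma2_limit (um up vm vp : ℝ) (h : um > up) (hp : up > 0)
    (hvm : 0 < vm) (hvp : 0 < vp) (hr : up / vp < um / vm) :
    Filter.Tendsto (fun e : ℝ =>
      up + ((up + Real.sqrt (up ^ 2 + 4 * e * vp)) / (2 * vp)) *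
        ((up - um - ((up + Real.sqrt (up ^ 2 + 4 * e * vp)) / (2 * vp)) * vp + ((um - Real.sqrt (um ^ 2 + 4 * e * vm)) / (2 * vm)) * vm) / ((um - Real.sqrt (um ^ 2 + 4 * e * vm)) / (2 * vm) - (up + Real.sqrt (up ^ 2 + 4 * e * vp)) / (2 * vp))))
      (nhdsWithin 0 (Set.Ioi 0)) (nhds (um + up)) := by
  have hum : (0:ℝ) < um := lt_trans hp h
  have squm : Real.sqrt (um ^ 2 + 4 * (0:ℝ) * vm) = um := by
    simp [Real.sqrt_sq hum.le]
  have squp : Real.sqrt (up ^ 2 + 4 * (0:ℝ) * vp) = up := by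
    simp [Real.sqrt_sq hp.le]
  have hD0 : (um - Real.sqrt (um ^ 2 + 4 * (0:ℝ) * vm)) / (2 * vm)
      - (up + Real.sqrt (up ^ 2 + 4 * (0:ℝ) * vp)) / (2 * vp) ≠ 0 := by
    rw [squm, squp]
    simp only [sub_self, zero_div, zero_sub, ne_eq, neg_eq_zero, div_eq_zero_iff]
    push_neg
    constructor
    · positivity
    · positivity
  have hca : ContinuousAt (fun e : ℝ =>
      up + ((up + Real.sqrt (up ^ 2 + 4 * e * vp)) / (2 * vp)) *
        ((up - um - ((up + Real.sqrt (up ^ 2 + 4 * e * vp)) / (2 * vp)) * vp + ((um - Real.sqrt (um ^ 2 + 4 * e * vm)) / (2 * vm)) * vm) / ((um - Real.sqrt (um ^ 2 + 4 * e * vm)) / (2 * vm) - (up + Real.sqrt (up ^ 2 + 4 * e * vp)) / (2 * vp)))) 0 := by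
    apply ContinuousAt.add continuousAt_const
    apply ContinuousAt.mul (by fun_prop)
    exact ContinuousAt.div (by fun_prop) (by fun_prop) hD0
  have hval : up + ((up + Real.sqrt (up ^ 2 + 4 * (0:ℝ) * vp)) / (2 * vp)) *
        ((up - um - ((up + Real.sqrt (up ^ 2 + 4 * (0:ℝ) * vp)) / (2 * vp)) * vp + ((um - Real.sqrt (um ^ 2 + 4 * (0:ℝ) * vm)) / (2 * vm)) * vm) / ((um - Real.sqrt (um ^ 2 + 4 * (0:ℝ) * vm)) / (2 * vm) - (up + Real.sqrt (up ^ 2 + 4 * (0:ℝ) * vp)) / (2 * vp))) = um + up := by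
    rw [squm, squp]
    have hup : up ≠ 0 := hp.ne'
    have hvp' : vp ≠ 0 := hvp.ne'
    have hvm' : vm ≠ 0 := hvm.ne'
    field_simp
    have hne : 2 * vp * (-up + -up) ≠ 0 := by
      apply mul_ne_zero (by positivity)
      intro hc
      apply hup
      linarith
    ring
  have := hca.tendsto
  rw [hval] at this
  exact this.mono_left nhdsWithin_le_nhds
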